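/- If $w$ is a recurrent infinite word, then a word $s$ is a factor of a conjugate of a factor of $w$ if and only if $s$ is a product of two factors of $w$. Consequently $\pexp_2(w) = \cexp(w)$. -/
import Mathlib


open scoped ENNReal

/-- `u` occurs at position `i` of the infinite word `w`. -/
def FactorAt {α : Type*} (u : List α) (w : ℕ → α) (i : ℕ) : Prop :=
  u = (List.range u.length).map (fun k => w (i + k))

/-- `u` occurs as a factor of the infinite word `w` (at some position `i`). -/
def FactorOf {α : Type*} (u : List α) (w : ℕ → α) : Prop :=
  ∃ i : ℕ, FactorAt u w i

/-- `p` is a period of the finite word `v`. -/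
def HasPeriod {α : Type*} (v : List α) (p : ℕ) : Prop :=
  0 < p ∧ p ≤ v.length ∧ ∀ i : ℕ, i + p < v.length → v[i + p]? = v[i]?

/-- `s` is a factor of a conjugate of a factor of `w`. -/
def CircFactor {α : Type*} (s : List α) (w : ℕ → α) : Prop :=
  ∃ f u v : List α, FactorOf f w ∧ f = u ++ v ∧ s <:+: (v ++ u)

section Aux

variable {α : Type*} (w : ℕ → α)

/-- The segment of `w` of length `n` starting at `i`. -/
def seg (i n : ℕ) : List α := (List.range n).map (fun k => w (i + k))

lemma seg_length (i n : ℕ) : (seg w i n).length = n := by simp [seg]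

lemma factorAt_iff_seg {u : List α} {i : ℕ} : FactorAt u w i ↔ u = seg w i u.length :=
  Iff.rfl

lemma factorAt_seg (i n : ℕ) : FactorAt (seg w i n) w i := by
  rw [factorAt_iff_seg, seg_length]

lemma seg_append (i m n : ℕ) : seg w i (m + n) = seg w i m ++ seg w (i + m) n := by
  unfold seg
  rw [List.range_add, List.map_append, List.map_map]
  simp [Function.comp_def, Nat.add_assoc]

lemma factorAt_append_iff {u v : List α} {i : ℕ} :
    FactorAt (u ++ v) w i ↔ FactorAt u w i ∧ FactorAt v w (i + u.length) := by
  rw [factorAt_iff_seg, factorAt_iff_seg, factorAt_iff_seg, List.length_append, seg_append]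
  constructor
  · intro h
    exact List.append_inj h (by rw [seg_length])
  · rintro ⟨hu, hv⟩
    rw [← hu, ← hv]

lemma factorOf_of_infix {s f : List α} (h : s <:+: f) (hf : FactorOf f w) : FactorOf s w := by
  obtain ⟨l, r, rfl⟩ := h
  obtain ⟨i, hi⟩ := hf
  rw [List.append_assoc, factorAt_append_iff] at hi
  rw [factorAt_append_iff] at hi
  exact ⟨i + l.length, hi.2.1⟩

lemma infix_split {s a b : List α} (h : s <:+: a ++ b) :
    ∃ x y : List α, s = x ++ y ∧ x <:+: a ∧ y <:+: b := by
  obtain ⟨l, r, h⟩ := h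
  rcases le_or_gt a.length l.length with hla | hla
  · refine ⟨[], s, by simp, List.nil_infix, l.drop a.length, r, ?_⟩
    have h3 := congrArg (List.drop a.length) h
    rw [List.append_assoc, List.drop_append_of_le_length hla,
      List.drop_append_of_le_length le_rfl, List.drop_length, List.nil_append] at h3
    rw [List.append_assoc]
    exact h3
  · have key : s ++ r = a.drop l.length ++ b := by
      have h2 : (l ++ (s ++ r)).drop l.length = (a ++ b).drop l.length := by
        rw [← List.append_assoc, h]
      rwa [List.drop_append_of_le_length le_rfl, List.drop_length, List.nil_append,
        List.drop_append_of_le_length hla.le] at h2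
    set k := a.length - l.length with hk
    have hak : (a.drop l.length).length = k := by simp [hk]
    by_cases hks : k ≤ s.length
    · refine ⟨s.take k, s.drop k, (List.take_append_drop k s).symm, ?_, ?_⟩
      · have hx : s.take k = a.drop l.length := by
          have h3 := congrArg (List.take k) key
          rwa [List.take_append_of_le_length hks, List.take_left' hak] at h3
        rw [hx]
        exact (List.drop_suffix _ _).isInfix
      · have hy : s.drop k ++ r = b := by
          have h3 := congrArg (List.drop k) key
          rwa [List.drop_append_of_le_length hks, List.drop_left' hak] at h3
        exact (hy ▸ List.prefix_append (s.drop k) r).isInfix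
    · push_neg at hks
      refine ⟨s, [], by simp, ?_, List.nil_infix⟩
      have hx : s = (a.drop l.length).take s.length := by
        have h3 := congrArg (List.take s.length) key
        rwa [List.take_append_of_le_length le_rfl, List.take_length,
          List.take_append_of_le_length (by rw [hak]; exact hks.le)] at h3
      rw [hx]
      exact ((List.take_prefix _ _).isInfix).trans ((List.drop_suffix _ _).isInfix)

end Aux

/-- for a recurrent infinite word `w`, the circular factors of `w` are
exactly the products of two factors of `w`; consequently `pexp₂(w) = cexp(w)`. -/
theorem recurrent_circular_eq_two_products {α : Type*} (w : ℕ → α)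
    (hrec : ∀ u : List α, FactorOf u w → ∀ N : ℕ, ∃ i ≥ N, FactorAt u w i) :
    (∀ s : List α, CircFactor s w ↔
      ∃ x y : List α, FactorOf x w ∧ FactorOf y w ∧ s = x ++ y) ∧
    sSup {e : ℝ≥0∞ | ∃ (s : List α) (p : ℕ), CircFactor s w ∧ HasPeriod s p ∧
        e = (s.length : ℝ≥0∞) / p} =
    sSup {e : ℝ≥0∞ | ∃ (x y : List α) (p : ℕ), FactorOf x w ∧ FactorOf y w ∧
        HasPeriod (x ++ y) p ∧ e = ((x ++ y).length : ℝ≥0∞) / p} := by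
  have hiff : ∀ s : List α, CircFactor s w ↔
      ∃ x y : List α, FactorOf x w ∧ FactorOf y w ∧ s = x ++ y := by
    intro s
    constructor
    · rintro ⟨f, u, v, hf, rfl, hs⟩
      obtain ⟨i, hi⟩ := hf
      rw [factorAt_append_iff] at hi
      obtain ⟨x, y, rfl, hx, hy⟩ := infix_split hs
      exact ⟨x, y, factorOf_of_infix w hx ⟨_, hi.2⟩, factorOf_of_infix w hy ⟨_, hi.1⟩, rfl⟩
    · rintro ⟨x, y, hx, hy, rfl⟩
      obtain ⟨j, hj⟩ := hy
      obtain ⟨i, hiN, hi⟩ := hrec x hx (j + y.length)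
      set m := i - (j + y.length) with hm
      refine ⟨(y ++ seg w (j + y.length) m) ++ x, y ++ seg w (j + y.length) m, x, ⟨j, ?_⟩,
        rfl, ⟨[], seg w (j + y.length) m, by simp⟩⟩
      rw [factorAt_append_iff, factorAt_append_iff]
      refine ⟨⟨hj, factorAt_seg w _ _⟩, ?_⟩
      rw [List.length_append, seg_length]
      have : j + (y.length + m) = i := by omega
      rw [this]
      exact hi
  refine ⟨hiff, ?_⟩
  have hset : {e : ℝ≥0∞ | ∃ (s : List α) (p : ℕ), CircFactor s w ∧ HasPeriod s p ∧
      e = (s.length : ℝ≥0∞) / p} =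
      {e : ℝ≥0∞ | ∃ (x y : List α) (p : ℕ), FactorOf x w ∧ FactorOf y w ∧
      HasPeriod (x ++ y) p ∧ e = ((x ++ y).length : ℝ≥0∞) / p} := by
    ext e
    simp only [Set.mem_setOf_eq]
    constructor
    · rintro ⟨s, p, hcirc, hper, rfl⟩
      obtain ⟨x, y, hx, hy, rfl⟩ := (hiff s).1 hcirc
      exact ⟨x, y, p, hx, hy, hper, rfl⟩
    · rintro ⟨x, y, p, hx, hy, hper, rfl⟩
      exact ⟨x ++ y, p, (hiff _).2 ⟨x, y, hx, hy, rfl⟩, hper, rfl⟩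
  rw [hset]
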